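/- arXiv:2012.13774 — 4 statements merged into one kernel-verified Lean document; each statement's English description precedes it below -/
import Mathlib

section
/- Let S be a bounded measurable subset of the plane ℝ² with Lebesgue measure (area) equal to 1. Then one sixth of the integral, over all triples of points A=(x,y), B=(u,v), C=(z,ω) of S, of the squared area of the triangle ABC equals one quarter of the affine invariant 𝒜(S); formally, (1/6)·∫∫_{(x,y)∈S} ∫∫_{(u,v)∈S} ∫∫_{(z,ω)∈S} (1/4)·((x−z)(v−ω) − (y−ω)(u−z))² dx dy du dv dz dω = (1/4)·(μ₂₀(S)·μ₀₂(S) − μ₁₁(S)²). -/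
open MeasureTheory Set

lemma integS {S : Set (ℝ × ℝ)} (hmeas : MeasurableSet S)
    (hbdd : Bornology.IsBounded S) (harea : volume S = 1)
    {f : ℝ × ℝ → ℝ} (hf : Continuous f) : IntegrableOn f S := by
  obtain ⟨C, hC⟩ := hbdd.isCompact_closure.exists_bound_of_continuousOn hf.continuousOn
  refine Measure.integrableOn_of_bounded (M := C) (by simp [harea]) hf.aestronglyMeasurable ?_
  filter_upwards [ae_restrict_mem hmeas] with P hP
  exact hC P (subset_closure hP)

lemma lincomb {S : Set (ℝ × ℝ)} (hmeas : MeasurableSet S)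
    (hbdd : Bornology.IsBounded S) (harea : volume S = 1)
    (a b c0 c1 c2 c3 c4 c5 : ℝ) :
    (∫ P in S, (c0 + c1 * (P.1 - a) + c2 * (P.2 - b) + c3 * (P.1 - a) ^ 2
      + c4 * (P.2 - b) ^ 2 + c5 * ((P.1 - a) * (P.2 - b))))
    = c0 + c1 * (∫ P in S, (P.1 - a)) + c2 * (∫ P in S, (P.2 - b))
      + c3 * (∫ P in S, (P.1 - a) ^ 2) + c4 * (∫ P in S, (P.2 - b) ^ 2)
      + c5 * (∫ P in S, (P.1 - a) * (P.2 - b)) := by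
  have I : ∀ {f : ℝ × ℝ → ℝ}, Continuous f → IntegrableOn f S :=
    fun hf => integS hmeas hbdd harea hf
  have i0 : IntegrableOn (fun _ : ℝ × ℝ => c0) S := I continuous_const
  have i1 : IntegrableOn (fun P : ℝ × ℝ => c1 * (P.1 - a)) S := I (by fun_prop)
  have i2 : IntegrableOn (fun P : ℝ × ℝ => c2 * (P.2 - b)) S := I (by fun_prop)
  have i3 : IntegrableOn (fun P : ℝ × ℝ => c3 * (P.1 - a) ^ 2) S := I (by fun_prop)
  have i4 : IntegrableOn (fun P : ℝ × ℝ => c4 * (P.2 - b) ^ 2) S := I (by fun_prop)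
  have i5 : IntegrableOn (fun P : ℝ × ℝ => c5 * ((P.1 - a) * (P.2 - b))) S := I (by fun_prop)
  have j1 : IntegrableOn (fun P : ℝ × ℝ => c0 + c1 * (P.1 - a)) S := i0.add i1
  have j2 : IntegrableOn (fun P : ℝ × ℝ => c0 + c1 * (P.1 - a) + c2 * (P.2 - b)) S := j1.add i2
  have j3 : IntegrableOn (fun P : ℝ × ℝ => c0 + c1 * (P.1 - a) + c2 * (P.2 - b)
      + c3 * (P.1 - a) ^ 2) S := j2.add i3
  have j4 : IntegrableOn (fun P : ℝ × ℝ => c0 + c1 * (P.1 - a) + c2 * (P.2 - b)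
      + c3 * (P.1 - a) ^ 2 + c4 * (P.2 - b) ^ 2) S := j3.add i4
  rw [integral_add j4 i5, integral_add j3 i4, integral_add j2 i3, integral_add j1 i2,
    integral_add i0 i1, integral_const, integral_const_mul, integral_const_mul,
    integral_const_mul, integral_const_mul, integral_const_mul]
  simp [harea, Measure.real]

/-- Geometric moment `m_{p,q}(S) = ∫∫_S x^p y^q dx dy`. -/
noncomputable def geomMoment (p q : ℕ) (S : Set (ℝ × ℝ)) : ℝ :=
  ∫ P in S, P.1 ^ p * P.2 ^ q

/-- x-coordinate of the centroid of `S`. -/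
noncomputable def xc (S : Set (ℝ × ℝ)) : ℝ :=
  geomMoment 1 0 S / geomMoment 0 0 S

/-- y-coordinate of the centroid of `S`. -/
noncomputable def yc (S : Set (ℝ × ℝ)) : ℝ :=
  geomMoment 0 1 S / geomMoment 0 0 S

/-- Un-normalized central moment `M_{p,q}(S)`. -/
noncomputable def centralMoment (p q : ℕ) (S : Set (ℝ × ℝ)) : ℝ :=
  ∫ P in S, (P.1 - xc S) ^ p * (P.2 - yc S) ^ q

/-- Normalized central moment `μ_{p,q}(S) = m₀₀(S)^{-(p+q+2)/2} · M_{p,q}(S)`. -/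
noncomputable def mu (p q : ℕ) (S : Set (ℝ × ℝ)) : ℝ :=
  centralMoment p q S / geomMoment 0 0 S ^ (((p : ℝ) + (q : ℝ) + 2) / 2)

/-- The affine moment invariant `𝒜(S) = μ₂₀(S)·μ₀₂(S) − μ₁₁(S)²`. -/
noncomputable def affInv (S : Set (ℝ × ℝ)) : ℝ :=
  mu 2 0 S * mu 0 2 S - mu 1 1 S ^ 2

/-- For a bounded measurable `S ⊆ ℝ²` of area 1, one sixth of the
integral over triples `A, B, C ∈ S` of the squared area of triangle `ABC`
equals one quarter of `𝒜(S)`. -/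
theorem stmt_0 (S : Set (ℝ × ℝ)) (hmeas : MeasurableSet S)
    (hbdd : Bornology.IsBounded S) (harea : volume S = 1) :
    (1 / 6 : ℝ) *
      (∫ A in S, ∫ B in S, ∫ C in S,
        (1 / 4 : ℝ) *
          ((A.1 - C.1) * (B.2 - C.2) - (A.2 - C.2) * (B.1 - C.1)) ^ 2)
    = (1 / 4 : ℝ) * (mu 2 0 S * mu 0 2 S - mu 1 1 S ^ 2) := by
  have I : ∀ {f : ℝ × ℝ → ℝ}, Continuous f → IntegrableOn f S :=
    fun hf => integS hmeas hbdd harea hf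
  have m00 : geomMoment 0 0 S = 1 := by
    simp [geomMoment, harea, Measure.real]
  have hxc : xc S = geomMoment 1 0 S := by simp [xc, m00]
  have hyc : yc S = geomMoment 0 1 S := by simp [yc, m00]
  have e10 : (∫ P in S, (P.1 - xc S)) = 0 := by
    rw [integral_sub (I continuous_fst) (I continuous_const), integral_const]
    have : (∫ P in S, P.1) = geomMoment 1 0 S := by simp [geomMoment]
    simp [this, harea, hxc, Measure.real]
  have e01 : (∫ P in S, (P.2 - yc S)) = 0 := by
    rw [integral_sub (I continuous_snd) (I continuous_const), integral_const]
    have : (∫ P in S, P.2) = geomMoment 0 1 S := by simp [geomMoment]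
    simp [this, harea, hyc, Measure.real]
  set M20 := ∫ P in S, (P.1 - xc S) ^ 2 with hM20
  set M02 := ∫ P in S, (P.2 - yc S) ^ 2 with hM02
  set M11 := ∫ P in S, (P.1 - xc S) * (P.2 - yc S) with hM11
  have key : ∀ c0 c1 c2 c3 c4 c5 : ℝ,
      (∫ P in S, (c0 + c1 * (P.1 - xc S) + c2 * (P.2 - yc S) + c3 * (P.1 - xc S) ^ 2
        + c4 * (P.2 - yc S) ^ 2 + c5 * ((P.1 - xc S) * (P.2 - yc S))))
      = c0 + c3 * M20 + c4 * M02 + c5 * M11 := by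
    intro c0 c1 c2 c3 c4 c5
    rw [lincomb hmeas hbdd harea (xc S) (yc S) c0 c1 c2 c3 c4 c5, e10, e01,
      ← hM20, ← hM02, ← hM11]
    ring
  have stage1 : ∀ A B : ℝ × ℝ,
      (∫ C in S, (1 / 4 : ℝ) *
        ((A.1 - C.1) * (B.2 - C.2) - (A.2 - C.2) * (B.1 - C.1)) ^ 2)
      = (1/4) * ((A.1 - xc S) * (B.2 - yc S) - (A.2 - yc S) * (B.1 - xc S)) ^ 2
        + (1/4) * (A.2 - B.2) ^ 2 * M20 + (1/4) * (A.1 - B.1) ^ 2 * M02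
        + (-(1/2) * ((A.2 - B.2) * (A.1 - B.1))) * M11 := by
    intro A B
    have h := key ((1/4) * ((A.1 - xc S) * (B.2 - yc S) - (A.2 - yc S) * (B.1 - xc S)) ^ 2)
      ((1/2) * (((A.1 - xc S) * (B.2 - yc S) - (A.2 - yc S) * (B.1 - xc S)) * (A.2 - B.2)))
      (-(1/2) * (((A.1 - xc S) * (B.2 - yc S) - (A.2 - yc S) * (B.1 - xc S)) * (A.1 - B.1)))
      ((1/4) * (A.2 - B.2) ^ 2) ((1/4) * (A.1 - B.1) ^ 2)
      (-(1/2) * ((A.2 - B.2) * (A.1 - B.1)))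
    rw [← h]
    refine integral_congr_ae (Filter.Eventually.of_forall fun C => ?_)
    ring
  have stage2 : ∀ A : ℝ × ℝ,
      (∫ B in S,
        ((1/4) * ((A.1 - xc S) * (B.2 - yc S) - (A.2 - yc S) * (B.1 - xc S)) ^ 2
        + (1/4) * (A.2 - B.2) ^ 2 * M20 + (1/4) * (A.1 - B.1) ^ 2 * M02
        + (-(1/2) * ((A.2 - B.2) * (A.1 - B.1))) * M11))
      = (1/4) * ((A.2 - yc S) ^ 2 * M20 + (A.1 - xc S) ^ 2 * M02
          - 2 * (A.1 - xc S) * (A.2 - yc S) * M11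
          + ((A.2 - yc S) ^ 2 + M02) * M20 + ((A.1 - xc S) ^ 2 + M20) * M02
          + (-2 * (A.1 - xc S) * (A.2 - yc S) - 2 * M11) * M11) := by
    intro A
    have h := key
      ((1/4) * ((A.2 - yc S) ^ 2 * M20 + (A.1 - xc S) ^ 2 * M02
        - 2 * (A.1 - xc S) * (A.2 - yc S) * M11))
      ((1/4) * (-2 * (A.1 - xc S) * M02 + 2 * (A.2 - yc S) * M11))
      ((1/4) * (-2 * (A.2 - yc S) * M20 + 2 * (A.1 - xc S) * M11))
      ((1/4) * ((A.2 - yc S) ^ 2 + M02))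
      ((1/4) * ((A.1 - xc S) ^ 2 + M20))
      ((1/4) * (-2 * (A.1 - xc S) * (A.2 - yc S) - 2 * M11))
    calc _ = ∫ P in S, ((1/4) * ((A.2 - yc S) ^ 2 * M20 + (A.1 - xc S) ^ 2 * M02
            - 2 * (A.1 - xc S) * (A.2 - yc S) * M11)
          + (1/4) * (-2 * (A.1 - xc S) * M02 + 2 * (A.2 - yc S) * M11) * (P.1 - xc S)
          + (1/4) * (-2 * (A.2 - yc S) * M20 + 2 * (A.1 - xc S) * M11) * (P.2 - yc S)
          + (1/4) * ((A.2 - yc S) ^ 2 + M02) * (P.1 - xc S) ^ 2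
          + (1/4) * ((A.1 - xc S) ^ 2 + M20) * (P.2 - yc S) ^ 2
          + (1/4) * (-2 * (A.1 - xc S) * (A.2 - yc S) - 2 * M11) * ((P.1 - xc S) * (P.2 - yc S))) := by
            refine integral_congr_ae (Filter.Eventually.of_forall fun B => ?_)
            ring
      _ = _ := by rw [h]; ring
  have stage3 :
      (∫ A in S,
        ((1/4) * ((A.2 - yc S) ^ 2 * M20 + (A.1 - xc S) ^ 2 * M02
          - 2 * (A.1 - xc S) * (A.2 - yc S) * M11
          + ((A.2 - yc S) ^ 2 + M02) * M20 + ((A.1 - xc S) ^ 2 + M20) * M02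
          + (-2 * (A.1 - xc S) * (A.2 - yc S) - 2 * M11) * M11)))
      = (3/2) * (M20 * M02 - M11 ^ 2) := by
    have h := key
      ((1/4) * (M02 * M20 + M20 * M02 - 2 * M11 ^ 2))
      0 0 ((1/2) * M02) ((1/2) * M20) (-M11)
    calc _ = ∫ P in S, ((1/4) * (M02 * M20 + M20 * M02 - 2 * M11 ^ 2)
          + (0:ℝ) * (P.1 - xc S) + (0:ℝ) * (P.2 - yc S)
          + (1/2) * M02 * (P.1 - xc S) ^ 2
          + (1/2) * M20 * (P.2 - yc S) ^ 2
          + (-M11) * ((P.1 - xc S) * (P.2 - yc S))) := by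
            refine integral_congr_ae (Filter.Eventually.of_forall fun A => ?_)
            ring
      _ = _ := by rw [h]; ring
  have hmain : (∫ A in S, ∫ B in S, ∫ C in S,
      (1 / 4 : ℝ) * ((A.1 - C.1) * (B.2 - C.2) - (A.2 - C.2) * (B.1 - C.1)) ^ 2)
      = (3/2) * (M20 * M02 - M11 ^ 2) := by
    rw [← stage3]
    refine integral_congr_ae (Filter.Eventually.of_forall fun A => ?_)
    beta_reduce
    rw [← stage2 A]
    exact integral_congr_ae (Filter.Eventually.of_forall fun B => stage1 A B)
  rw [hmain]
  have hmu20 : mu 2 0 S = M20 := by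
    simp [mu, m00, centralMoment, Real.one_rpow, hM20]
  have hmu02 : mu 0 2 S = M02 := by
    simp [mu, m00, centralMoment, Real.one_rpow, hM02]
  have hmu11 : mu 1 1 S = M11 := by
    simp [mu, m00, centralMoment, Real.one_rpow, hM11]
  rw [hmu20, hmu02, hmu11]
  ring
end

section
/- Let S be a bounded measurable subset of ℝ² with positive area. Denote by M_{p,q}(S) = ∫∫_S (x−x_c(S))^p (y−y_c(S))^q dx dy the (un-normalized) central moments. Then ∫∫_{(x,y)∈S} ∫∫_{(u,v)∈S} ∫∫_{(z,ω)∈S} ((x−z)(v−ω) − (y−ω)(u−z))² dx dy du dv dz dω = 6·m_{0,0}(S)·(M₂₀(S)·M₀₂(S) − M₁₁(S)²). -/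
open MeasureTheory Set

/-- For a bounded measurable `S ⊆ ℝ²` of positive area, the triple
integral of the squared determinant equals `6·m₀₀(S)·(M₂₀(S)·M₀₂(S) − M₁₁(S)²)`. -/
theorem stmt_1 (S : Set (ℝ × ℝ)) (hmeas : MeasurableSet S)
    (hbdd : Bornology.IsBounded S) (hpos : 0 < (volume S).toReal) :
    (∫ A in S, ∫ B in S, ∫ C in S,
        ((A.1 - C.1) * (B.2 - C.2) - (A.2 - C.2) * (B.1 - C.1)) ^ 2)
    = 6 * geomMoment 0 0 S *
        (centralMoment 2 0 S * centralMoment 0 2 S - centralMoment 1 1 S ^ 2) := by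
  have hint : ∀ f : ℝ × ℝ → ℝ, Continuous f → IntegrableOn f S volume := fun f hf =>
    (hf.continuousOn.integrableOn_compact hbdd.isCompact_closure).mono_set subset_closure
  set m : ℝ := (volume S).toReal with hm_def
  have hm : m ≠ 0 := ne_of_gt hpos
  set I10 : ℝ := ∫ P in S, P.1 with hI10
  set I01 : ℝ := ∫ P in S, P.2 with hI01
  set I20 : ℝ := ∫ P in S, P.1 ^ 2 with hI20
  set I11 : ℝ := ∫ P in S, P.1 * P.2 with hI11
  set I02 : ℝ := ∫ P in S, P.2 ^ 2 with hI02
  have key : ∀ a b c d e f : ℝ,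
      (∫ P in S, (a + b * P.1 + c * P.2 + d * P.1 ^ 2 + e * (P.1 * P.2) + f * P.2 ^ 2))
        = a * m + b * I10 + c * I01 + d * I20 + e * I11 + f * I02 := by
    intro a b c d e f
    have h1 : IntegrableOn (fun _ : ℝ × ℝ => a) S volume := hint _ continuous_const
    have h2 : IntegrableOn (fun P : ℝ × ℝ => b * P.1) S volume :=
      hint _ (continuous_const.mul continuous_fst)
    have h3 : IntegrableOn (fun P : ℝ × ℝ => c * P.2) S volume :=
      hint _ (continuous_const.mul continuous_snd)
    have h4 : IntegrableOn (fun P : ℝ × ℝ => d * P.1 ^ 2) S volume :=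
      hint _ (continuous_const.mul (continuous_fst.pow 2))
    have h5 : IntegrableOn (fun P : ℝ × ℝ => e * (P.1 * P.2)) S volume :=
      hint _ (continuous_const.mul (continuous_fst.mul continuous_snd))
    have h6 : IntegrableOn (fun P : ℝ × ℝ => f * P.2 ^ 2) S volume :=
      hint _ (continuous_const.mul (continuous_snd.pow 2))
    have h12 : IntegrableOn (fun P : ℝ × ℝ => a + b * P.1) S volume := h1.add h2
    have h13 : IntegrableOn (fun P : ℝ × ℝ => a + b * P.1 + c * P.2) S volume := h12.add h3
    have h14 : IntegrableOn (fun P : ℝ × ℝ => a + b * P.1 + c * P.2 + d * P.1 ^ 2) S volume :=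
      h13.add h4
    have h15 : IntegrableOn
        (fun P : ℝ × ℝ => a + b * P.1 + c * P.2 + d * P.1 ^ 2 + e * (P.1 * P.2)) S volume :=
      h14.add h5
    rw [integral_add h15 h6, integral_add h14 h5, integral_add h13 h4, integral_add h12 h3,
        integral_add h1 h2,
        integral_const_mul, integral_const_mul, integral_const_mul, integral_const_mul,
        integral_const_mul, setIntegral_const, smul_eq_mul, measureReal_def, ← hm_def, mul_comm m a]
  have inner : ∀ A B : ℝ × ℝ,
      (∫ C in S, ((A.1 - C.1) * (B.2 - C.2) - (A.2 - C.2) * (B.1 - C.1)) ^ 2)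
      = (A.1 * B.2 - B.1 * A.2) ^ 2 * m
        + 2 * (A.1 * B.2 - B.1 * A.2) * (A.2 - B.2) * I10
        + 2 * (A.1 * B.2 - B.1 * A.2) * (B.1 - A.1) * I01
        + (A.2 - B.2) ^ 2 * I20
        + 2 * (A.2 - B.2) * (B.1 - A.1) * I11
        + (B.1 - A.1) ^ 2 * I02 := by
    intro A B
    rw [← key ((A.1 * B.2 - B.1 * A.2) ^ 2) (2 * (A.1 * B.2 - B.1 * A.2) * (A.2 - B.2))
        (2 * (A.1 * B.2 - B.1 * A.2) * (B.1 - A.1)) ((A.2 - B.2) ^ 2)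
        (2 * (A.2 - B.2) * (B.1 - A.1)) ((B.1 - A.1) ^ 2)]
    exact setIntegral_congr_fun hmeas fun C _ => by ring
  have mid : ∀ A : ℝ × ℝ,
      (∫ B in S, ((A.1 * B.2 - B.1 * A.2) ^ 2 * m
        + 2 * (A.1 * B.2 - B.1 * A.2) * (A.2 - B.2) * I10
        + 2 * (A.1 * B.2 - B.1 * A.2) * (B.1 - A.1) * I01
        + (A.2 - B.2) ^ 2 * I20
        + 2 * (A.2 - B.2) * (B.1 - A.1) * I11
        + (B.1 - A.1) ^ 2 * I02))
      = (I20 * A.2 ^ 2 - 2 * I11 * (A.1 * A.2) + I02 * A.1 ^ 2) * m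
        + (-2 * I10 * A.2 ^ 2 + 2 * I01 * (A.1 * A.2) + 2 * I11 * A.2 - 2 * I02 * A.1) * I10
        + (2 * I10 * (A.1 * A.2) - 2 * I01 * A.1 ^ 2 - 2 * I20 * A.2 + 2 * I11 * A.1) * I01
        + (m * A.2 ^ 2 - 2 * I01 * A.2 + I02) * I20
        + (-2 * m * (A.1 * A.2) + 2 * I10 * A.2 + 2 * I01 * A.1 - 2 * I11) * I11
        + (m * A.1 ^ 2 - 2 * I10 * A.1 + I20) * I02 := by
    intro A
    rw [← key (I20 * A.2 ^ 2 - 2 * I11 * (A.1 * A.2) + I02 * A.1 ^ 2)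
        (-2 * I10 * A.2 ^ 2 + 2 * I01 * (A.1 * A.2) + 2 * I11 * A.2 - 2 * I02 * A.1)
        (2 * I10 * (A.1 * A.2) - 2 * I01 * A.1 ^ 2 - 2 * I20 * A.2 + 2 * I11 * A.1)
        (m * A.2 ^ 2 - 2 * I01 * A.2 + I02)
        (-2 * m * (A.1 * A.2) + 2 * I10 * A.2 + 2 * I01 * A.1 - 2 * I11)
        (m * A.1 ^ 2 - 2 * I10 * A.1 + I20)]
    exact setIntegral_congr_fun hmeas fun B _ => by ring
  have outer :
      (∫ A in S, ((I20 * A.2 ^ 2 - 2 * I11 * (A.1 * A.2) + I02 * A.1 ^ 2) * m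
        + (-2 * I10 * A.2 ^ 2 + 2 * I01 * (A.1 * A.2) + 2 * I11 * A.2 - 2 * I02 * A.1) * I10
        + (2 * I10 * (A.1 * A.2) - 2 * I01 * A.1 ^ 2 - 2 * I20 * A.2 + 2 * I11 * A.1) * I01
        + (m * A.2 ^ 2 - 2 * I01 * A.2 + I02) * I20
        + (-2 * m * (A.1 * A.2) + 2 * I10 * A.2 + 2 * I01 * A.1 - 2 * I11) * I11
        + (m * A.1 ^ 2 - 2 * I10 * A.1 + I20) * I02))
      = (2 * I20 * I02 - 2 * I11 ^ 2) * m
        + (-4 * I10 * I02 + 4 * I01 * I11) * I10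
        + (4 * I10 * I11 - 4 * I01 * I20) * I01
        + (2 * m * I02 - 2 * I01 ^ 2) * I20
        + (-4 * m * I11 + 4 * I10 * I01) * I11
        + (2 * m * I20 - 2 * I10 ^ 2) * I02 := by
    rw [← key (2 * I20 * I02 - 2 * I11 ^ 2) (-4 * I10 * I02 + 4 * I01 * I11)
        (4 * I10 * I11 - 4 * I01 * I20) (2 * m * I02 - 2 * I01 ^ 2)
        (-4 * m * I11 + 4 * I10 * I01) (2 * m * I20 - 2 * I10 ^ 2)]
    exact setIntegral_congr_fun hmeas fun A _ => by ring
  simp_rw [inner, mid]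
  rw [outer]
  have hg : geomMoment 0 0 S = m := by
    simp only [geomMoment, pow_zero, mul_one]
    rw [setIntegral_const, smul_eq_mul, mul_one, measureReal_def, ← hm_def]
  have hxc : xc S = I10 / m := by
    rw [xc, hg]
    congr 1
    simp only [geomMoment, pow_one, pow_zero, mul_one]
    rfl
  have hyc : yc S = I01 / m := by
    rw [yc, hg]
    congr 1
    simp only [geomMoment, pow_one, pow_zero, one_mul]
    rfl
  have hM20 : centralMoment 2 0 S
      = (xc S) ^ 2 * m + (-(2 * xc S)) * I10 + 0 * I01 + 1 * I20 + 0 * I11 + 0 * I02 := by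
    rw [centralMoment, ← key ((xc S) ^ 2) (-(2 * xc S)) 0 1 0 0]
    exact setIntegral_congr_fun hmeas fun P _ => by ring
  have hM02 : centralMoment 0 2 S
      = (yc S) ^ 2 * m + 0 * I10 + (-(2 * yc S)) * I01 + 0 * I20 + 0 * I11 + 1 * I02 := by
    rw [centralMoment, ← key ((yc S) ^ 2) 0 (-(2 * yc S)) 0 0 1]
    exact setIntegral_congr_fun hmeas fun P _ => by ring
  have hM11 : centralMoment 1 1 S
      = (xc S * yc S) * m + (-(yc S)) * I10 + (-(xc S)) * I01 + 0 * I20 + 1 * I11 + 0 * I02 := by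
    rw [centralMoment, ← key (xc S * yc S) (-(yc S)) (-(xc S)) 0 1 0]
    exact setIntegral_congr_fun hmeas fun P _ => by ring
  rw [hg, hM20, hM02, hM11, hxc, hyc]
  field_simp
  ring
end

section
/- The quantity 𝒜(S) = μ₂₀(S)·μ₀₂(S) − μ₁₁(S)² is an affine invariant: let S be a bounded measurable subset of ℝ² with positive area, let L be an invertible 2×2 real matrix, let b ∈ ℝ², and let T(P) = L·P + b. Then 𝒜(T(S)) = 𝒜(S). -/
open MeasureTheory Set

private lemma myIntegrable {S : Set (ℝ × ℝ)} (hbdd : Bornology.IsBounded S)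
    {f : ℝ × ℝ → ℝ} (hf : Continuous f) : IntegrableOn f S := by
  exact (hf.continuousOn.integrableOn_compact hbdd.isCompact_closure).mono_set subset_closure

private lemma int3 {S : Set (ℝ × ℝ)} (hbdd : Bornology.IsBounded S)
    {f g h : ℝ × ℝ → ℝ} (hf : Continuous f) (hg : Continuous g) (hh : Continuous h)
    (α β γ : ℝ) :
    ∫ P in S, (α * f P + β * g P + γ * h P) =
      α * (∫ P in S, f P) + β * (∫ P in S, g P) + γ * (∫ P in S, h P) := by
  have i1 : IntegrableOn (fun P => α * f P) S := (myIntegrable hbdd hf).const_mul α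
  have i2 : IntegrableOn (fun P => β * g P) S := (myIntegrable hbdd hg).const_mul β
  have i3 : IntegrableOn (fun P => γ * h P) S := (myIntegrable hbdd hh).const_mul γ
  calc ∫ P in S, (α * f P + β * g P + γ * h P)
      = (∫ P in S, (α * f P + β * g P)) + ∫ P in S, γ * h P := integral_add (i1.add i2) i3
    _ = ((∫ P in S, α * f P) + ∫ P in S, β * g P) + ∫ P in S, γ * h P := by
        rw [integral_add i1 i2]
    _ = α * (∫ P in S, f P) + β * (∫ P in S, g P) + γ * (∫ P in S, h P) := by
        rw [integral_const_mul, integral_const_mul, integral_const_mul]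

private lemma cov {S : Set (ℝ × ℝ)} (hmeas : MeasurableSet S)
    (L : Matrix (Fin 2) (Fin 2) ℝ) (hL : L.det ≠ 0) (b : ℝ × ℝ)
    (T : ℝ × ℝ → ℝ × ℝ)
    (hT : ∀ P, T P = (L 0 0 * P.1 + L 0 1 * P.2 + b.1,
                      L 1 0 * P.1 + L 1 1 * P.2 + b.2))
    (g : ℝ × ℝ → ℝ) :
    ∫ P in T '' S, g P = |L.det| * ∫ P in S, g (T P) := by
  set A := LinearMap.toContinuousLinearMap
    (Matrix.toLin (Module.Basis.finTwoProd ℝ) (Module.Basis.finTwoProd ℝ)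
      !![L 0 0, L 0 1; L 1 0, L 1 1]) with hA
  have hAapp : ∀ P : ℝ × ℝ,
      A P = (L 0 0 * P.1 + L 0 1 * P.2, L 1 0 * P.1 + L 1 1 * P.2) := by
    intro P
    simp [hA, Matrix.toLin_finTwoProd_apply]
  have hTA : T = fun P => A P + b := by
    funext P
    rw [hT P, hAapp P]
    rfl
  have hderiv : ∀ x ∈ S, HasFDerivWithinAt T A S x := by
    intro x _
    rw [hTA]
    exact (A.hasFDerivAt.add_const b).hasFDerivWithinAt
  have hdet2 : L 0 0 * L 1 1 - L 0 1 * L 1 0 ≠ 0 := by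
    rwa [Matrix.det_fin_two] at hL
  have hinj : Function.Injective T := by
    intro p q hpq
    rw [hT p, hT q, Prod.ext_iff] at hpq
    obtain ⟨h1, h2⟩ := hpq
    simp only at h1 h2
    have e1 : (p.1 - q.1) * (L 0 0 * L 1 1 - L 0 1 * L 1 0) = 0 := by
      linear_combination L 1 1 * h1 - L 0 1 * h2
    have e2 : (p.2 - q.2) * (L 0 0 * L 1 1 - L 0 1 * L 1 0) = 0 := by
      linear_combination L 0 0 * h2 - L 1 0 * h1
    have f1 : p.1 = q.1 := sub_eq_zero.mp ((mul_eq_zero.1 e1).resolve_right hdet2)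
    have f2 : p.2 = q.2 := sub_eq_zero.mp ((mul_eq_zero.1 e2).resolve_right hdet2)
    exact Prod.ext f1 f2
  have hAdet : A.det = L.det := by
    rw [ContinuousLinearMap.det, hA, LinearMap.coe_toContinuousLinearMap,
      LinearMap.det_toLin, ← Matrix.eta_fin_two]
  rw [integral_image_eq_integral_abs_det_fderiv_smul volume hmeas hderiv hinj.injOn g]
  simp only [hAdet, smul_eq_mul]
  exact integral_const_mul _ _

/-- `𝒜(S)` is an affine invariant: for `T(P) = L·P + b` with `L`
an invertible 2×2 real matrix, `𝒜(T(S)) = 𝒜(S)`. -/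
theorem stmt_7 (S : Set (ℝ × ℝ)) (hmeas : MeasurableSet S)
    (hbdd : Bornology.IsBounded S) (hpos : 0 < (volume S).toReal)
    (L : Matrix (Fin 2) (Fin 2) ℝ) (hL : L.det ≠ 0) (b : ℝ × ℝ)
    (T : ℝ × ℝ → ℝ × ℝ)
    (hT : ∀ P, T P = (L 0 0 * P.1 + L 0 1 * P.2 + b.1,
                      L 1 0 * P.1 + L 1 1 * P.2 + b.2)) :
    affInv (T '' S) = affInv S := by
  have covg := cov hmeas L hL b T hT
  have hΔ : L.det = L 0 0 * L 1 1 - L 0 1 * L 1 0 := Matrix.det_fin_two L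
  have hdpos : 0 < |L.det| := abs_pos.2 hL
  set d := |L.det| with hdDef
  set A := L 0 0
  set B := L 0 1
  set C := L 1 0
  set D := L 1 1
  have hΔne : A * D - B * C ≠ 0 := by rw [← hΔ]; exact hL
  have hd2 : d ^ 2 = (A * D - B * C) ^ 2 := by rw [hdDef, sq_abs, hΔ]
  -- basic facts about S
  have hone : (∫ P in S, (1 : ℝ)) = geomMoment 0 0 S := by simp [geomMoment]
  have hm00 : geomMoment 0 0 S = (volume S).toReal := by simp [geomMoment]; rfl
  have hm00pos : 0 < geomMoment 0 0 S := by rw [hm00]; exact hpos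
  have hfst : (∫ P in S, P.1) = geomMoment 1 0 S := by simp [geomMoment]
  have hsnd : (∫ P in S, P.2) = geomMoment 0 1 S := by simp [geomMoment]
  -- image moments of order zero and one
  have hm00' : geomMoment 0 0 (T '' S) = d * geomMoment 0 0 S := by
    rw [geomMoment, covg]
    simp [geomMoment]
  have lin1 : ∀ α β γ : ℝ, (∫ P in S, (α * P.1 + β * P.2 + γ)) =
      α * geomMoment 1 0 S + β * geomMoment 0 1 S + γ * geomMoment 0 0 S := by
    intro α β γ
    have := int3 hbdd continuous_fst continuous_snd
      (continuous_const : Continuous fun _ : ℝ × ℝ => (1 : ℝ)) α β γ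
    simp only [mul_one] at this
    rw [this, hfst, hsnd, hone]
  have hm10' : geomMoment 1 0 (T '' S) =
      d * (A * geomMoment 1 0 S + B * geomMoment 0 1 S + b.1 * geomMoment 0 0 S) := by
    rw [geomMoment, covg]
    congr 1
    rw [← lin1 A B b.1]
    refine integral_congr_ae (Filter.Eventually.of_forall fun P => ?_)
    beta_reduce
    rw [hT P]
    ring
  have hm01' : geomMoment 0 1 (T '' S) =
      d * (C * geomMoment 1 0 S + D * geomMoment 0 1 S + b.2 * geomMoment 0 0 S) := by
    rw [geomMoment, covg]
    congr 1
    rw [← lin1 C D b.2]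
    refine integral_congr_ae (Filter.Eventually.of_forall fun P => ?_)
    beta_reduce
    rw [hT P]
    ring
  -- centroid of image
  have hxc' : xc (T '' S) = A * xc S + B * yc S + b.1 := by
    rw [xc, hm10', hm00', xc, yc]
    field_simp
  have hyc' : yc (T '' S) = C * xc S + D * yc S + b.2 := by
    rw [yc, hm01', hm00', xc, yc]
    field_simp
  -- central second moments
  set J20 := ∫ P in S, (P.1 - xc S) ^ 2 with hJ20
  set J11 := ∫ P in S, (P.1 - xc S) * (P.2 - yc S) with hJ11
  set J02 := ∫ P in S, (P.2 - yc S) ^ 2 with hJ02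
  have hu : Continuous fun P : ℝ × ℝ => P.1 - xc S := continuous_fst.sub continuous_const
  have hv : Continuous fun P : ℝ × ℝ => P.2 - yc S := continuous_snd.sub continuous_const
  have lin2 : ∀ α β γ : ℝ,
      (∫ P in S, (α * (P.1 - xc S) ^ 2 + β * ((P.1 - xc S) * (P.2 - yc S)) +
        γ * (P.2 - yc S) ^ 2)) = α * J20 + β * J11 + γ * J02 :=
    fun α β γ => int3 hbdd (hu.pow 2) (hu.mul hv) (hv.pow 2) α β γ
  have hsub1 : ∀ P : ℝ × ℝ, (T P).1 - xc (T '' S) =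
      A * (P.1 - xc S) + B * (P.2 - yc S) := by
    intro P
    rw [hT P, hxc']
    ring
  have hsub2 : ∀ P : ℝ × ℝ, (T P).2 - yc (T '' S) =
      C * (P.1 - xc S) + D * (P.2 - yc S) := by
    intro P
    rw [hT P, hyc']
    ring
  have hC20 : centralMoment 2 0 S = J20 := by
    rw [centralMoment]; simp [hJ20]
  have hC11 : centralMoment 1 1 S = J11 := by
    rw [centralMoment]; simp [hJ11]
  have hC02 : centralMoment 0 2 S = J02 := by
    rw [centralMoment]; simp [hJ02]
  have hC20' : centralMoment 2 0 (T '' S) =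
      d * (A ^ 2 * J20 + (2 * (A * B)) * J11 + B ^ 2 * J02) := by
    rw [centralMoment, covg]
    congr 1
    rw [← lin2 (A ^ 2) (2 * (A * B)) (B ^ 2)]
    refine integral_congr_ae (Filter.Eventually.of_forall fun P => ?_)
    beta_reduce
    rw [hsub1 P, hsub2 P]
    ring
  have hC11' : centralMoment 1 1 (T '' S) =
      d * ((A * C) * J20 + (A * D + B * C) * J11 + (B * D) * J02) := by
    rw [centralMoment, covg]
    congr 1
    rw [← lin2 (A * C) (A * D + B * C) (B * D)]
    refine integral_congr_ae (Filter.Eventually.of_forall fun P => ?_)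
    beta_reduce
    rw [hsub1 P, hsub2 P]
    ring
  have hC02' : centralMoment 0 2 (T '' S) =
      d * (C ^ 2 * J20 + (2 * (C * D)) * J11 + D ^ 2 * J02) := by
    rw [centralMoment, covg]
    congr 1
    rw [← lin2 (C ^ 2) (2 * (C * D)) (D ^ 2)]
    refine integral_congr_ae (Filter.Eventually.of_forall fun P => ?_)
    beta_reduce
    rw [hsub1 P, hsub2 P]
    ring
  -- normalized moments have exponent 2
  have hmu : ∀ (X : Set (ℝ × ℝ)) (p q : ℕ), p + q = 2 →
      mu p q X = centralMoment p q X / geomMoment 0 0 X ^ 2 := by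
    intro X p q hpq
    rw [mu]
    congr 1
    rw [show ((p : ℝ) + (q : ℝ) + 2) / 2 = (2 : ℝ) by
      have : (p : ℝ) + (q : ℝ) = 2 := by exact_mod_cast hpq
      rw [this]; norm_num]
    exact Real.rpow_two _
  rw [affInv, affInv, hmu _ 2 0 rfl, hmu _ 0 2 rfl, hmu _ 1 1 rfl,
    hmu _ 2 0 rfl, hmu _ 0 2 rfl, hmu _ 1 1 rfl,
    hC20', hC11', hC02', hC20, hC11, hC02, hm00']
  have comb : ∀ a bb c m : ℝ, a / m ^ 2 * (bb / m ^ 2) - (c / m ^ 2) ^ 2 =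
      (a * bb - c ^ 2) / (m ^ 2) ^ 2 := fun a bb c m => by ring
  rw [comb, comb]
  have key : d * (A ^ 2 * J20 + 2 * (A * B) * J11 + B ^ 2 * J02) *
      (d * (C ^ 2 * J20 + 2 * (C * D) * J11 + D ^ 2 * J02)) -
      (d * (A * C * J20 + (A * D + B * C) * J11 + B * D * J02)) ^ 2 =
      d ^ 2 * ((A * D - B * C) ^ 2 * (J20 * J02 - J11 ^ 2)) := by ring
  rw [key, show ((d * geomMoment 0 0 S) ^ 2) ^ 2 =
    (d ^ 2) ^ 2 * (geomMoment 0 0 S ^ 2) ^ 2 from by ring, hd2]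
  field_simp
end

section
/- The multi-component shape measure ℳ is an affine invariant: let S₁, …, Sₙ be pairwise disjoint bounded measurable subsets of ℝ², each with positive area, let L be an invertible 2×2 real matrix, let b ∈ ℝ², and let T(P) = L·P + b. Then ℳ(T(S₁) ∪ … ∪ T(Sₙ)) = ℳ(S₁ ∪ … ∪ Sₙ), where the components of the transformed multi-component shape are T(S₁), …, T(Sₙ). -/
open MeasureTheory Set

/-- The multi-component shape measure
`ℳ(S₁ ∪ … ∪ Sₙ) = 𝒜(⋃ᵢ Sᵢ) − (1/m₀₀(⋃ᵢ Sᵢ)⁴) · Σᵢ m₀₀(Sᵢ)⁴·𝒜(Sᵢ)`. -/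
noncomputable def multiMeasure (n : ℕ) (S : Fin n → Set (ℝ × ℝ)) : ℝ :=
  affInv (⋃ i, S i) -
    (1 / geomMoment 0 0 (⋃ i, S i) ^ 4) *
      ∑ i, geomMoment 0 0 (S i) ^ 4 * affInv (S i)

lemma integrableOn_cont {S : Set (ℝ × ℝ)}
    (hb : Bornology.IsBounded S) {f : ℝ × ℝ → ℝ} (hf : Continuous f) :
    IntegrableOn f S :=
  (hf.continuousOn.integrableOn_compact hb.isCompact_closure).mono_set subset_closure

lemma integral_lin {S : Set (ℝ × ℝ)} (hb : Bornology.IsBounded S) (A B C : ℝ) :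
    ∫ P in S, (A * P.1 + B * P.2 + C) =
      A * (∫ P in S, P.1) + B * (∫ P in S, P.2) + C * (volume S).toReal := by
  have Ix : IntegrableOn (fun P : ℝ × ℝ => P.1) S := integrableOn_cont hb continuous_fst
  have Iy : IntegrableOn (fun P : ℝ × ℝ => P.2) S := integrableOn_cont hb continuous_snd
  have I12 : IntegrableOn (fun P : ℝ × ℝ => A * P.1 + B * P.2) S :=
    (Ix.const_mul A).add (Iy.const_mul B)
  rw [integral_add I12 (integrableOn_const hb.measure_lt_top.ne),
    integral_add (Ix.const_mul A) (Iy.const_mul B), integral_const_mul, integral_const_mul,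
    setIntegral_const, smul_eq_mul, mul_comm C, Measure.real]

lemma integral_quad {S : Set (ℝ × ℝ)} (hb : Bornology.IsBounded S) (u v A B C : ℝ) :
    ∫ P in S, (A * (P.1 - u) ^ 2 + B * ((P.1 - u) * (P.2 - v)) + C * (P.2 - v) ^ 2) =
      A * (∫ P in S, (P.1 - u) ^ 2) + B * (∫ P in S, (P.1 - u) * (P.2 - v)) +
        C * (∫ P in S, (P.2 - v) ^ 2) := by
  have IX : IntegrableOn (fun P : ℝ × ℝ => (P.1 - u) ^ 2) S :=
    integrableOn_cont hb (by continuity)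
  have IXY : IntegrableOn (fun P : ℝ × ℝ => (P.1 - u) * (P.2 - v)) S :=
    integrableOn_cont hb (by continuity)
  have IY : IntegrableOn (fun P : ℝ × ℝ => (P.2 - v) ^ 2) S :=
    integrableOn_cont hb (by continuity)
  have I12 : IntegrableOn (fun P : ℝ × ℝ => A * (P.1 - u) ^ 2 + B * ((P.1 - u) * (P.2 - v))) S :=
    (IX.const_mul A).add (IXY.const_mul B)
  rw [integral_add I12 (IY.const_mul C),
    integral_add (IX.const_mul A) (IXY.const_mul B), integral_const_mul, integral_const_mul,
    integral_const_mul]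

noncomputable def lmap (a b c d : ℝ) : (ℝ × ℝ) →L[ℝ] (ℝ × ℝ) :=
  LinearMap.toContinuousLinearMap
  { toFun := fun P => (a * P.1 + b * P.2, c * P.1 + d * P.2)
    map_add' := by intro P Q; simp [Prod.ext_iff]; constructor <;> ring
    map_smul' := by intro r P; simp [Prod.ext_iff, smul_eq_mul]; constructor <;> ring }

lemma lmap_apply (a b c d : ℝ) (P : ℝ × ℝ) :
    lmap a b c d P = (a * P.1 + b * P.2, c * P.1 + d * P.2) := rfl

lemma lmap_det (a b c d : ℝ) : (lmap a b c d).det = a * d - b * c := by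
  have : (lmap a b c d).det = LinearMap.det ((lmap a b c d) : (ℝ×ℝ) →ₗ[ℝ] (ℝ×ℝ)) := rfl
  rw [this, ← LinearMap.det_toMatrix (Module.Basis.finTwoProd ℝ), Matrix.det_fin_two]
  simp [LinearMap.toMatrix_apply, Module.Basis.finTwoProd_zero, Module.Basis.finTwoProd_one,
    Module.Basis.coe_finTwoProd_repr, lmap_apply]


lemma Tmap_inj {a b c d : ℝ} (h : a * d - b * c ≠ 0) (e₁ e₂ : ℝ) :
    Function.Injective (fun P : ℝ × ℝ => (a * P.1 + b * P.2 + e₁, c * P.1 + d * P.2 + e₂)) := by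
  intro P Q hPQ
  simp only [Prod.ext_iff] at hPQ
  obtain ⟨h1, h2⟩ := hPQ
  have hx : (a * d - b * c) * (P.1 - Q.1) = 0 := by linear_combination d * h1 - b * h2
  have hy : (a * d - b * c) * (P.2 - Q.2) = 0 := by linear_combination a * h2 - c * h1
  have hx' := sub_eq_zero.mp ((mul_eq_zero.mp hx).resolve_left h)
  have hy' := sub_eq_zero.mp ((mul_eq_zero.mp hy).resolve_left h)
  exact Prod.ext hx' hy'

lemma cov_s8 {a b c d : ℝ} (h : a * d - b * c ≠ 0) (e₁ e₂ : ℝ) {S : Set (ℝ × ℝ)}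
    (hS : MeasurableSet S) (g : ℝ × ℝ → ℝ) :
    ∫ P in (fun P : ℝ × ℝ => (a * P.1 + b * P.2 + e₁, c * P.1 + d * P.2 + e₂)) '' S, g P =
      ∫ P in S, |a * d - b * c| * g (a * P.1 + b * P.2 + e₁, c * P.1 + d * P.2 + e₂) := by
  have hder : ∀ x ∈ S, HasFDerivWithinAt
      (fun P : ℝ × ℝ => (a * P.1 + b * P.2 + e₁, c * P.1 + d * P.2 + e₂))
      (lmap a b c d) S x := by
    intro x hx
    have : (fun P : ℝ × ℝ => (a * P.1 + b * P.2 + e₁, c * P.1 + d * P.2 + e₂)) =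
        fun P => lmap a b c d P + (e₁, e₂) := by
      funext P; simp [lmap_apply, Prod.ext_iff]
    rw [this]
    exact ((lmap a b c d).hasFDerivAt.add_const (e₁, e₂)).hasFDerivWithinAt
  have := integral_image_eq_integral_abs_det_fderiv_smul volume hS hder
    ((Tmap_inj h e₁ e₂).injOn) g
  rw [this]
  simp [lmap_det, smul_eq_mul]


lemma key (a b c d e₁ e₂ : ℝ) (hΔ : a * d - b * c ≠ 0) (S : Set (ℝ × ℝ))
    (hS : MeasurableSet S) (hb : Bornology.IsBounded S) (hm : 0 < (volume S).toReal) :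
    geomMoment 0 0 ((fun P : ℝ × ℝ => (a * P.1 + b * P.2 + e₁, c * P.1 + d * P.2 + e₂)) '' S) =
      |a * d - b * c| * geomMoment 0 0 S ∧
    affInv ((fun P : ℝ × ℝ => (a * P.1 + b * P.2 + e₁, c * P.1 + d * P.2 + e₂)) '' S) =
      affInv S := by
  set t : ℝ := |a * d - b * c| with htdef
  have ht : t ≠ 0 := abs_ne_zero.mpr hΔ
  set U := (fun P : ℝ × ℝ => (a * P.1 + b * P.2 + e₁, c * P.1 + d * P.2 + e₂)) '' S with hUdef
  -- basic moments of S
  have hmS : geomMoment 0 0 S = (volume S).toReal := by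
    simp [geomMoment, setIntegral_const, Measure.real]
  have hm0 : geomMoment 0 0 S ≠ 0 := by rw [hmS]; exact ne_of_gt hm
  have h10 : geomMoment 1 0 S = ∫ P in S, P.1 := by simp [geomMoment]
  have h01 : geomMoment 0 1 S = ∫ P in S, P.2 := by simp [geomMoment]
  -- m00 of image
  have hU00 : geomMoment 0 0 U = t * geomMoment 0 0 S := by
    rw [hUdef, geomMoment, cov_s8 hΔ e₁ e₂ hS]
    simp only [pow_zero, mul_one]
    simp [setIntegral_const, hmS, mul_comm, Measure.real, htdef]
  refine ⟨hU00, ?_⟩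
  -- first moments of image
  have hU10 : geomMoment 1 0 U =
      t * (a * geomMoment 1 0 S + b * geomMoment 0 1 S + e₁ * geomMoment 0 0 S) := by
    rw [hUdef, geomMoment, cov_s8 hΔ e₁ e₂ hS]
    simp only [pow_one, pow_zero, mul_one]
    rw [integral_const_mul, integral_lin hb, h10, h01, hmS]
  have hU01 : geomMoment 0 1 U =
      t * (c * geomMoment 1 0 S + d * geomMoment 0 1 S + e₂ * geomMoment 0 0 S) := by
    rw [hUdef, geomMoment, cov_s8 hΔ e₁ e₂ hS]
    simp only [pow_one, pow_zero, one_mul]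
    rw [integral_const_mul, integral_lin hb, h10, h01, hmS]
  -- centroid of image
  have hxcU : xc U = a * xc S + b * yc S + e₁ := by
    rw [xc, hU10, hU00, xc, yc]
    field_simp
  have hycU : yc U = c * xc S + d * yc S + e₂ := by
    rw [yc, hU01, hU00, xc, yc]
    field_simp
  -- central second moments
  set P2 := ∫ P in S, (P.1 - xc S) ^ 2 with hP2
  set Q := ∫ P in S, (P.1 - xc S) * (P.2 - yc S) with hQ
  set R := ∫ P in S, (P.2 - yc S) ^ 2 with hR
  have hc20 : centralMoment 2 0 S = P2 := by simp [centralMoment, hP2]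
  have hc11 : centralMoment 1 1 S = Q := by simp [centralMoment, hQ]
  have hc02 : centralMoment 0 2 S = R := by simp [centralMoment, hR]
  have hsub1 : ∀ P : ℝ × ℝ, a * P.1 + b * P.2 + e₁ - xc U =
      a * (P.1 - xc S) + b * (P.2 - yc S) := by
    intro P; rw [hxcU]; ring
  have hsub2 : ∀ P : ℝ × ℝ, c * P.1 + d * P.2 + e₂ - yc U =
      c * (P.1 - xc S) + d * (P.2 - yc S) := by
    intro P; rw [hycU]; ring
  have hCM20 : centralMoment 2 0 U = t * (a ^ 2 * P2 + (2 * a * b) * Q + b ^ 2 * R) := by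
    rw [centralMoment, hUdef, cov_s8 hΔ e₁ e₂ hS]
    simp only [pow_zero, mul_one]
    have : ∀ P : ℝ × ℝ, t * (a * P.1 + b * P.2 + e₁ - xc U) ^ 2 =
        t * (a ^ 2 * (P.1 - xc S) ^ 2 + (2 * a * b) * ((P.1 - xc S) * (P.2 - yc S)) +
          b ^ 2 * (P.2 - yc S) ^ 2) := by
      intro P; rw [hsub1 P]; ring
    simp only [pow_zero, mul_one, ← hUdef, ← htdef]
    simp only [this]
    rw [integral_const_mul, integral_quad hb]
  have hCM11 : centralMoment 1 1 U =
      t * ((a * c) * P2 + (a * d + b * c) * Q + (b * d) * R) := by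
    rw [centralMoment, hUdef, cov_s8 hΔ e₁ e₂ hS]
    have h2 : ∀ P : ℝ × ℝ,
        t * ((a * P.1 + b * P.2 + e₁ - xc U) ^ 1 * (c * P.1 + d * P.2 + e₂ - yc U) ^ 1) =
        t * ((a * c) * (P.1 - xc S) ^ 2 +
          (a * d + b * c) * ((P.1 - xc S) * (P.2 - yc S)) + (b * d) * (P.2 - yc S) ^ 2) := by
      intro P; rw [pow_one, pow_one, hsub1 P, hsub2 P]; ring
    simp only [← hUdef, ← htdef]
    simp only [h2]
    rw [integral_const_mul, integral_quad hb]
  have hCM02 : centralMoment 0 2 U = t * (c ^ 2 * P2 + (2 * c * d) * Q + d ^ 2 * R) := by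
    rw [centralMoment, hUdef, cov_s8 hΔ e₁ e₂ hS]
    have h2 : ∀ P : ℝ × ℝ,
        t * ((a * P.1 + b * P.2 + e₁ - xc U) ^ 0 * (c * P.1 + d * P.2 + e₂ - yc U) ^ 2) =
        t * (c ^ 2 * (P.1 - xc S) ^ 2 + (2 * c * d) * ((P.1 - xc S) * (P.2 - yc S)) +
          d ^ 2 * (P.2 - yc S) ^ 2) := by
      intro P; rw [pow_zero, one_mul, hsub2 P]; ring
    simp only [← hUdef, ← htdef]
    simp only [h2]
    rw [integral_const_mul, integral_quad hb]
  -- mu with exponent 2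
  have hmu : ∀ (W : Set (ℝ × ℝ)) (p q : ℕ), p + q = 2 →
      mu p q W = centralMoment p q W / geomMoment 0 0 W ^ (2 : ℕ) := by
    intro W p q hpq
    have hc : ((p : ℝ) + (q : ℝ) + 2) / 2 = ((2 : ℕ) : ℝ) := by
      have : (p : ℝ) + (q : ℝ) = 2 := by exact_mod_cast hpq
      rw [this]; norm_num
    rw [mu, hc, Real.rpow_natCast]
  have ht2 : t ^ 2 = (a * d - b * c) ^ 2 := sq_abs _
  rw [affInv, affInv, hmu U 2 0 rfl, hmu U 0 2 rfl, hmu U 1 1 rfl,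
    hmu S 2 0 rfl, hmu S 0 2 rfl, hmu S 1 1 rfl,
    hCM20, hCM11, hCM02, hc20, hc11, hc02, hU00]
  field_simp
  rcases abs_cases (a * d - b * c) with ⟨habs, _⟩ | ⟨habs, _⟩ <;>
    rw [htdef, habs] <;> ring

/-- `ℳ` is an affine invariant: for pairwise disjoint bounded
measurable components `S₁, …, Sₙ` of positive area and an invertible affine map
`T(P) = L·P + b`, `ℳ(T(S₁) ∪ … ∪ T(Sₙ)) = ℳ(S₁ ∪ … ∪ Sₙ)`. -/
theorem stmt_8 (n : ℕ) (S : Fin n → Set (ℝ × ℝ))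
    (hdisj : Pairwise (Function.onFun Disjoint S))
    (hmeas : ∀ i, MeasurableSet (S i))
    (hbdd : ∀ i, Bornology.IsBounded (S i))
    (hpos : ∀ i, 0 < (volume (S i)).toReal)
    (L : Matrix (Fin 2) (Fin 2) ℝ) (hL : L.det ≠ 0) (b : ℝ × ℝ)
    (T : ℝ × ℝ → ℝ × ℝ)
    (hT : ∀ P, T P = (L 0 0 * P.1 + L 0 1 * P.2 + b.1,
                      L 1 0 * P.1 + L 1 1 * P.2 + b.2)) :
    multiMeasure n (fun i => T '' S i) = multiMeasure n S := by
  rcases Nat.eq_zero_or_pos n with hn | hn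
  · subst hn; simp [multiMeasure]
  have hT' : T = fun P : ℝ × ℝ => (L 0 0 * P.1 + L 0 1 * P.2 + b.1,
      L 1 0 * P.1 + L 1 1 * P.2 + b.2) := funext hT
  have hdet : L 0 0 * L 1 1 - L 0 1 * L 1 0 ≠ 0 := by
    rwa [Matrix.det_fin_two] at hL
  set t : ℝ := |L 0 0 * L 1 1 - L 0 1 * L 1 0| with htdef
  have ht : t ≠ 0 := abs_ne_zero.mpr hdet
  set U := ⋃ i, S i with hU
  have hUmeas : MeasurableSet U := MeasurableSet.iUnion hmeas
  have hUbdd : Bornology.IsBounded U := Bornology.isBounded_iUnion.mpr hbdd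
  have i0 : Fin n := ⟨0, hn⟩
  have hUpos : 0 < (volume U).toReal := by
    refine ENNReal.toReal_pos ?_ hUbdd.measure_lt_top.ne
    have h0 := (ENNReal.toReal_pos_iff.mp (hpos i0)).1
    exact (lt_of_lt_of_le h0 (measure_mono (subset_iUnion S i0))).ne'
  have keyU := key (L 0 0) (L 0 1) (L 1 0) (L 1 1) b.1 b.2 hdet U hUmeas hUbdd hUpos
  have keyi := fun i => key (L 0 0) (L 0 1) (L 1 0) (L 1 1) b.1 b.2 hdet (S i)
    (hmeas i) (hbdd i) (hpos i)
  have him : (⋃ i, T '' S i) = T '' U := (Set.image_iUnion).symm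
  rw [hT'] at him
  rw [multiMeasure, multiMeasure]
  simp only [hT']
  rw [him]
  rw [keyU.1, keyU.2, ← htdef]
  have hsum : ∀ i : Fin n,
      geomMoment 0 0 ((fun P : ℝ × ℝ => (L 0 0 * P.1 + L 0 1 * P.2 + b.1,
        L 1 0 * P.1 + L 1 1 * P.2 + b.2)) '' S i) ^ 4 *
      affInv ((fun P : ℝ × ℝ => (L 0 0 * P.1 + L 0 1 * P.2 + b.1,
        L 1 0 * P.1 + L 1 1 * P.2 + b.2)) '' S i) =
      t ^ 4 * (geomMoment 0 0 (S i) ^ 4 * affInv (S i)) := by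
    intro i
    rw [(keyi i).1, (keyi i).2, ← htdef, mul_pow]
    ring
  rw [Finset.sum_congr rfl (fun i _ => hsum i), ← Finset.mul_sum]
  have hmU : geomMoment 0 0 U ≠ 0 := by
    have : geomMoment 0 0 U = (volume U).toReal := by simp [geomMoment, setIntegral_const, Measure.real]
    rw [this]; exact ne_of_gt hUpos
  congr 1
  rw [mul_pow]
  rw [← hU]
  field_simp
end
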